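/- Let A be a local ring and I ⊆ A an ideal. Then for every r ≥ 1 the relative Milnor K-group K^M_r(A,I) and the relative group K̃^M_r(A,I) are each generated by Milnor symbols {a_1, …, a_r} (with all a_j ∈ A^×) such that a_i ∈ K^M_1(A,I) for some 1 ≤ i ≤ r. -/

import Mathlib

noncomputable section

namespace MilnorKTheory

/-- The tensor algebra `T_*(A^×)` over `ℤ` of the unit group of `A` (written additively). -/
abbrev PreK (A : Type*) [CommRing A] : Type _ := TensorAlgebra ℤ (Additive Aˣ)

/-- The element `a₁ ⊗ ⋯ ⊗ a_r` of the tensor algebra `T_*(A^×)`. -/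
def preSymbol {A : Type*} [CommRing A] : List Aˣ → PreK A
  | [] => 1
  | a :: l => TensorAlgebra.ι ℤ (Additive.ofMul a) * preSymbol l

/-- The relation cutting out Kato's Milnor ring: kill every homogeneous element
`a₁ ⊗ ⋯ ⊗ a_s` with `s ≥ 2` such that `a_i + a_j = 1` for some `i ≠ j`. -/
def katoRel (A : Type*) [CommRing A] : PreK A → PreK A → Prop := fun x y =>
  y = 0 ∧ ∃ l : List Aˣ, 2 ≤ l.length ∧
    (∃ i j : ℕ, ∃ hi : i < l.length, ∃ hj : j < l.length,
      i ≠ j ∧ ((l[i]'hi : A) + (l[j]'hj : A) = 1)) ∧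
    x = preSymbol l

/-- The relation cutting out the weak Milnor ring: kill the degree-2 elements
`a₁ ⊗ a₂` with `a₁ + a₂ = 1`. -/
def tildeRel (A : Type*) [CommRing A] : PreK A → PreK A → Prop := fun x y =>
  y = 0 ∧ ∃ a b : Aˣ, ((a : A) + (b : A) = 1) ∧ x = preSymbol [a, b]

/-- The (graded) quotient `T_*(A^×)/(Kato's Steinberg ideal)`, whose degree-`r` part is
Kato's Milnor K-group `K^M_r(A)`. -/
abbrev KRing (A : Type*) [CommRing A] : Type _ := RingQuot (katoRel A)

/-- The (graded) quotient `T_*(A^×)/(a ⊗ b : a + b = 1)`, whose degree-`r` part is the group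
`K̃^M_r(A)`. -/
abbrev TRing (A : Type*) [CommRing A] : Type _ := RingQuot (tildeRel A)

/-- The Milnor symbol `{a₁, …, a_r}` in Kato's Milnor ring. -/
def ksymbol {A : Type*} [CommRing A] (l : List Aˣ) : KRing A :=
  RingQuot.mkRingHom _ (preSymbol l)

/-- The Milnor symbol `{a₁, …, a_r}` in the weak Milnor ring. -/
def tsymbol {A : Type*} [CommRing A] (l : List Aˣ) : TRing A :=
  RingQuot.mkRingHom _ (preSymbol l)

section maps

variable {A B : Type*} [CommRing A] [CommRing B]

/-- The map of tensor algebras induced by a ring homomorphism `A →+* B` via the induced map of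
unit groups. -/
def preMap (φ : A →+* B) : PreK A →ₐ[ℤ] PreK B :=
  TensorAlgebra.lift ℤ ((TensorAlgebra.ι ℤ).comp
    ((MonoidHom.toAdditive (Units.map (φ : A →* B))).toIntLinearMap))

lemma preMap_preSymbol (φ : A →+* B) (l : List Aˣ) :
    preMap φ (preSymbol l) = preSymbol (l.map (Units.map (φ : A →* B))) := by
  induction l with
  | nil => simp [preSymbol]
  | cons a l ih =>
      simp only [preSymbol, map_mul, ih, List.map_cons]
      congr 1
      exact TensorAlgebra.lift_ι_apply _ _

/-- Functoriality of Kato's Milnor ring. -/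
def kmap (φ : A →+* B) : KRing A →+* KRing B :=
  RingQuot.lift ⟨(RingQuot.mkRingHom (katoRel B)).comp (preMap φ).toRingHom, by
    rintro x y ⟨rfl, l, hlen, ⟨i, j, hi, hj, hij, hsum⟩, rfl⟩
    simp only [RingHom.comp_apply, map_zero, AlgHom.toRingHom_eq_coe, RingHom.coe_coe]
    rw [preMap_preSymbol]
    refine (RingQuot.mkRingHom_rel ?_).trans (map_zero _)
    refine ⟨rfl, l.map (Units.map (φ : A →* B)), by simpa using hlen,
      ⟨i, j, by simpa using hi, by simpa using hj, hij, ?_⟩, rfl⟩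
    simp only [List.getElem_map]
    show φ _ + φ _ = 1
    rw [← map_add, hsum, map_one]⟩

/-- Functoriality of the weak Milnor ring. -/
def tmap (φ : A →+* B) : TRing A →+* TRing B :=
  RingQuot.lift ⟨(RingQuot.mkRingHom (tildeRel B)).comp (preMap φ).toRingHom, by
    rintro x y ⟨rfl, a, b, hsum, rfl⟩
    simp only [RingHom.comp_apply, map_zero, AlgHom.toRingHom_eq_coe, RingHom.coe_coe]
    rw [preMap_preSymbol]
    refine (RingQuot.mkRingHom_rel ?_).trans (map_zero _)
    refine ⟨rfl, Units.map (φ : A →* B) a, Units.map (φ : A →* B) b, ?_, rfl⟩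
    show φ _ + φ _ = 1
    rw [← map_add, hsum, map_one]⟩

/-- The canonical map `K̃^M_*(A) → K^M_*(A)`. -/
def tToK (A : Type*) [CommRing A] : TRing A →+* KRing A :=
  RingQuot.lift ⟨RingQuot.mkRingHom (katoRel A), by
    rintro x y ⟨rfl, a, b, hsum, rfl⟩
    rw [map_zero]
    refine (RingQuot.mkRingHom_rel ?_).trans (map_zero _)
    exact ⟨rfl, [a, b], by norm_num,
      ⟨0, 1, by norm_num, by norm_num, by norm_num, by simpa using hsum⟩, rfl⟩⟩

end maps

section groups

variable (A : Type*) [CommRing A]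

/-- The Milnor K-group `K^M_r(A)`: the degree-`r` part of Kato's Milnor ring, i.e. the
additive subgroup generated by the Milnor symbols of length `r`. -/
def KGroup (r : ℕ) : AddSubgroup (KRing A) :=
  AddSubgroup.closure { x | ∃ l : List Aˣ, l.length = r ∧ x = ksymbol l }

/-- The group `K̃^M_r(A)`: the degree-`r` part of the weak Milnor ring. -/
def TGroup (r : ℕ) : AddSubgroup (TRing A) :=
  AddSubgroup.closure { x | ∃ l : List Aˣ, l.length = r ∧ x = tsymbol l }

/-- The relative Milnor K-group `K^M_r(A, I)`: the kernel of
`K^M_r(A) → K^M_r(A/I)`. -/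
def relKGroup (I : Ideal A) (r : ℕ) : AddSubgroup (KRing A) :=
  KGroup A r ⊓ AddMonoidHom.ker (kmap (Ideal.Quotient.mk I)).toAddMonoidHom

/-- The relative group `K̃^M_r(A, I)`: the kernel of `K̃^M_r(A) → K̃^M_r(A/I)`. -/
def relTGroup (I : Ideal A) (r : ℕ) : AddSubgroup (TRing A) :=
  TGroup A r ⊓ AddMonoidHom.ker (tmap (Ideal.Quotient.mk I)).toAddMonoidHom

end groups

end MilnorKTheory

end

noncomputable section

namespace MilnorAux

open MilnorKTheory Polynomial
open AddSubgroup (closure subset_closure closure_le closure_induction)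

variable {A : Type*} [CommRing A]

lemma preSymbol_append (l₁ l₂ : List Aˣ) :
    preSymbol (l₁ ++ l₂) = preSymbol l₁ * preSymbol l₂ := by
  induction l₁ with
  | nil => simp [preSymbol]
  | cons a l ih => simp [preSymbol, ih, mul_assoc]

lemma preSymbol_eq_zero_of_one_mem {l : List Aˣ}
    (h : ∃ i, ∃ hi : i < l.length, l[i]'hi = 1) :
    preSymbol l = 0 := by
  induction l with
  | nil => rcases h with ⟨i, hi, _⟩; simp at hi
  | cons a l ih =>
      rcases h with ⟨i, hi, he⟩
      cases i with
      | zero =>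
          simp only [List.getElem_cons_zero] at he
          subst he
          simp [preSymbol]
      | succ n =>
          rw [preSymbol, ih ⟨n, by simpa using hi, by simpa using he⟩, mul_zero]

variable (rel : PreK A → PreK A → Prop)

/-- generic symbol -/
def msym (l : List Aˣ) : RingQuot rel := RingQuot.mkRingHom _ (preSymbol l)

/-- generic degree-one symbol -/
def mU (u : Aˣ) : RingQuot rel :=
  RingQuot.mkRingHom rel (TensorAlgebra.ι ℤ (Additive.ofMul u))

lemma msym_nil : msym rel [] = 1 := by
  rw [msym]; exact map_one _

lemma msym_cons (u : Aˣ) (l : List Aˣ) :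
    msym rel (u :: l) = mU rel u * msym rel l := by
  rw [msym, msym, mU, preSymbol, map_mul]

lemma msym_singleton (u : Aˣ) : msym rel [u] = mU rel u := by
  rw [msym_cons, msym_nil, mul_one]

lemma msym_append (l₁ l₂ : List Aˣ) :
    msym rel (l₁ ++ l₂) = msym rel l₁ * msym rel l₂ := by
  rw [msym, msym, msym, preSymbol_append, map_mul]

lemma mU_mul (u v : Aˣ) : mU rel (u * v) = mU rel u + mU rel v := by
  rw [mU, mU, mU, ofMul_mul, map_add, map_add]

lemma msym_split (l : List Aˣ) (i : ℕ) (hi : i < l.length) :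
    msym rel l = msym rel (l.take i) * (mU rel (l[i]'hi) * msym rel (l.drop (i + 1))) := by
  conv_lhs => rw [← List.take_append_drop i l, List.drop_eq_getElem_cons hi]
  rw [msym_append, msym_cons]


/-- additive-closure product lemma -/
lemma mul_mem_closure {R : Type*} [Ring R] {S T U : Set R}
    (h : ∀ s ∈ S, ∀ t ∈ T, s * t ∈ closure U) :
    ∀ x ∈ closure S, ∀ y ∈ closure T, x * y ∈ closure U := by
  have key : ∀ s ∈ S, ∀ y, y ∈ closure T → s * y ∈ closure U := by
    intro s hs y hy
    refine closure_induction (p := fun y _ => s * y ∈ closure U) ?_ ?_ ?_ ?_ hy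
    · exact fun t ht => h s hs t ht
    · simp only [mul_zero]; exact zero_mem _
    · intro a b _ _ ha hb; rw [mul_add]; exact add_mem ha hb
    · intro a _ ha; rw [mul_neg]; exact neg_mem ha
  intro x hx
  refine closure_induction (p := fun x _ => ∀ y, y ∈ closure T → x * y ∈ closure U)
    ?_ ?_ ?_ ?_ hx
  · exact fun s hs y hy => key s hs y hy
  · intro y _; rw [zero_mul]; exact zero_mem _
  · intro a b _ _ ha hb y hy; rw [add_mul]; exact add_mem (ha y hy) (hb y hy)
  · intro a _ ha y hy; rw [neg_mul]; exact neg_mem (ha y hy)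

/-- The grading map on the tensor algebra. -/
def Dpre : PreK A →ₐ[ℤ] Polynomial (PreK A) :=
  TensorAlgebra.lift ℤ
    { toFun := fun a => Polynomial.C (TensorAlgebra.ι ℤ a) * Polynomial.X
      map_add' := fun a b => by rw [map_add, map_add, add_mul]
      map_smul' := fun n a => by
        rw [map_smul, RingHom.id_apply, ← smul_mul_assoc]
        congr 1
        exact map_zsmul (Polynomial.C.toAddMonoidHom :
          PreK A →+ Polynomial (PreK A)) n _ }

lemma Dpre_ι (a : Additive Aˣ) :
    Dpre (TensorAlgebra.ι ℤ a) = Polynomial.C (TensorAlgebra.ι ℤ a) * Polynomial.X :=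
  TensorAlgebra.lift_ι_apply _ _

lemma Dpre_preSymbol (l : List Aˣ) :
    Dpre (preSymbol l) = Polynomial.C (preSymbol l) * Polynomial.X ^ l.length := by
  induction l with
  | nil => simp [preSymbol]
  | cons a l ih =>
      rw [preSymbol, map_mul, Dpre_ι, ih, List.length_cons, map_mul]
      rw [mul_assoc (Polynomial.C _) Polynomial.X, ← mul_assoc Polynomial.X,
        Polynomial.X_mul, mul_assoc, mul_assoc, ← pow_succ', ← mul_assoc]

variable {rel} in
lemma msym_eq_zero_of_rel {x : PreK A} (h : rel x 0) (l : List Aˣ) (hx : x = preSymbol l) :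
    msym rel l = 0 := by
  rw [msym, ← hx, RingQuot.mkRingHom_rel h, map_zero]

variable (Hrel : ∀ ⦃x y⦄, rel x y → y = 0 ∧ ∃ l : List Aˣ, x = preSymbol l)

/-- The grading map on the quotient ring. -/
def Dq : RingQuot rel →+* Polynomial (RingQuot rel) :=
  RingQuot.lift ⟨(Polynomial.mapRingHom (RingQuot.mkRingHom rel)).comp (Dpre (A := A)).toRingHom,
    by
      intro x y hxy
      obtain ⟨rfl, l, rfl⟩ := Hrel hxy
      have h0 : RingQuot.mkRingHom rel (preSymbol l) = 0 :=
        msym_eq_zero_of_rel hxy l rfl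
      simp only [RingHom.comp_apply, map_zero, AlgHom.toRingHom_eq_coe, RingHom.coe_coe]
      rw [Dpre_preSymbol, map_mul, map_pow, Polynomial.coe_mapRingHom, Polynomial.map_C,
        Polynomial.map_X, h0, map_zero, zero_mul]⟩

lemma Dq_mk (x : PreK A) :
    Dq rel Hrel (RingQuot.mkRingHom rel x) = (Dpre x).map (RingQuot.mkRingHom rel) := by
  rw [Dq, RingQuot.lift_mkRingHom_apply]
  rfl

lemma Dq_msym (l : List Aˣ) :
    Dq rel Hrel (msym rel l) = Polynomial.C (msym rel l) * Polynomial.X ^ l.length := by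
  rw [msym, Dq_mk, Dpre_preSymbol, Polynomial.map_mul, Polynomial.map_pow, Polynomial.map_C,
    Polynomial.map_X]

lemma coeff_Dq_msym (l : List Aˣ) (p : ℕ) :
    (Dq rel Hrel (msym rel l)).coeff p = if l.length = p then msym rel l else 0 := by
  rw [Dq_msym, Polynomial.C_mul_X_pow_eq_monomial, Polynomial.coeff_monomial]

/-- The degree-`p` part of the quotient ring. -/
def MG (p : ℕ) : AddSubgroup (RingQuot rel) :=
  closure { x | ∃ l : List Aˣ, l.length = p ∧ x = msym rel l }

lemma mem_MG {p : ℕ} {l : List Aˣ} (h : l.length = p) : msym rel l ∈ MG rel p :=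
  subset_closure ⟨l, h, rfl⟩

lemma MG_mul {p q : ℕ} {x y : RingQuot rel} (hx : x ∈ MG rel p) (hy : y ∈ MG rel q) :
    x * y ∈ MG rel (p + q) := by
  refine mul_mem_closure ?_ _ hx _ hy
  rintro s ⟨l₁, hl₁, rfl⟩ t ⟨l₂, hl₂, rfl⟩
  rw [← msym_append]
  exact mem_MG rel (by simp [hl₁, hl₂])

lemma coeff_Dq_mem (x : RingQuot rel) (p : ℕ) :
    (Dq rel Hrel x).coeff p ∈ MG rel p := by
  obtain ⟨y, rfl⟩ := RingQuot.mkRingHom_surjective rel x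
  induction y using TensorAlgebra.induction generalizing p with
  | algebraMap n =>
      have e : algebraMap ℤ (PreK A) n = n • preSymbol ([] : List Aˣ) := by
        rw [eq_intCast]
        show ((n : PreK A)) = n • (1 : PreK A)
        rw [zsmul_one]
      rw [e, map_zsmul, map_zsmul]
      rw [show RingQuot.mkRingHom rel (preSymbol ([] : List Aˣ)) = msym rel ([] : List Aˣ)
        from rfl, Polynomial.coeff_smul, coeff_Dq_msym]
      split
      · next h => exact zsmul_mem (mem_MG rel h) n
      · simp only [smul_zero]; exact zero_mem _
  | ι a =>
      have e : TensorAlgebra.ι ℤ a = preSymbol ([a.toMul] : List Aˣ) := by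
        simp [preSymbol]
      rw [e]
      rw [show RingQuot.mkRingHom rel (preSymbol ([a.toMul] : List Aˣ))
        = msym rel ([a.toMul]) from rfl, coeff_Dq_msym]
      split
      · next h => exact mem_MG rel h
      · exact zero_mem _
  | mul a b ha hb =>
      rw [map_mul, map_mul, Polynomial.coeff_mul]
      refine AddSubgroup.sum_mem _ ?_
      intro c hc
      rw [Finset.HasAntidiagonal.mem_antidiagonal] at hc
      rw [← hc]
      exact MG_mul rel (ha c.1) (hb c.2)
  | add a b ha hb =>
      rw [map_add, map_add, Polynomial.coeff_add]
      exact add_mem (ha p) (hb p)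

lemma coeff_Dq_self {r : ℕ} {x : RingQuot rel} (hx : x ∈ MG rel r) :
    (Dq rel Hrel x).coeff r = x := by
  refine closure_induction ?_ ?_ ?_ ?_ hx
  · rintro x ⟨l, hl, rfl⟩
    rw [coeff_Dq_msym, if_pos hl]
  · rw [map_zero, Polynomial.coeff_zero]
  · intro a b _ _ ha hb; rw [map_add, Polynomial.coeff_add, ha, hb]
  · intro a _ ha; rw [map_neg, Polynomial.coeff_neg, ha]


section Relative

variable (I : Ideal A)

/-- The relation killing the classes of units congruent to 1 mod `I`. -/
def relUnitRel : RingQuot rel → RingQuot rel → Prop := fun x y =>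
  y = 0 ∧ ∃ u : Aˣ, ((u : A) - 1 ∈ I) ∧ x = mU rel u

/-- The quotient map by the two-sided ideal generated by relative units. -/
def qmap : RingQuot rel →+* RingQuot (relUnitRel rel I) :=
  RingQuot.mkRingHom _

lemma qmap_mU {u : Aˣ} (hu : (u : A) - 1 ∈ I) : qmap rel I (mU rel u) = 0 := by
  have := RingQuot.mkRingHom_rel (r := relUnitRel rel I) ⟨rfl, u, hu, rfl⟩
  rw [qmap, this, map_zero]

lemma qmap_sandwich (x : RingQuot rel) {u : Aˣ} (hu : (u : A) - 1 ∈ I) (y : RingQuot rel) :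
    qmap rel I (x * mU rel u * y) = 0 := by
  rw [map_mul, map_mul, qmap_mU rel I hu, mul_zero, zero_mul]

/-- The subgroup generated by relative symbols of length `r`. -/
def SG (r : ℕ) : AddSubgroup (RingQuot rel) :=
  closure { x | ∃ l : List Aˣ, l.length = r ∧
    (∃ i : ℕ, ∃ hi : i < l.length, ((l[i]'hi : A) - 1) ∈ I) ∧ x = msym rel l }

lemma mem_SG {r : ℕ} {l : List Aˣ} (h : l.length = r)
    (h' : ∃ i : ℕ, ∃ hi : i < l.length, ((l[i]'hi : A) - 1) ∈ I) : msym rel l ∈ SG rel I r :=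
  subset_closure ⟨l, h, h', rfl⟩

/-- Generators of the two-sided ideal of relative units. -/
def Jgen : Set (RingQuot rel) :=
  { x | ∃ (a b : RingQuot rel) (u : Aˣ), ((u : A) - 1 ∈ I) ∧ x = a * mU rel u * b }

/-- The two-sided ideal of relative units, as an additive subgroup. -/
def JSG : AddSubgroup (RingQuot rel) := closure (Jgen rel I)

lemma JSG_mul_right {x : RingQuot rel} (hx : x ∈ JSG rel I) (c : RingQuot rel) :
    x * c ∈ JSG rel I := by
  have h : Jgen rel I ⊆ ((JSG rel I).comap (AddMonoidHom.mulRight c) : AddSubgroup _) := by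
    rintro x ⟨a, b, u, hu, rfl⟩
    show a * mU rel u * b * c ∈ JSG rel I
    exact subset_closure ⟨a, b * c, u, hu, by rw [mul_assoc (a * mU rel u)]⟩
  exact (AddSubgroup.closure_le _).mpr h hx

lemma JSG_mul_left {x : RingQuot rel} (hx : x ∈ JSG rel I) (c : RingQuot rel) :
    c * x ∈ JSG rel I := by
  have h : Jgen rel I ⊆ ((JSG rel I).comap (AddMonoidHom.mulLeft c) : AddSubgroup _) := by
    rintro x ⟨a, b, u, hu, rfl⟩
    show c * (a * mU rel u * b) ∈ JSG rel I
    exact subset_closure ⟨c * a, b, u, hu, by rw [← mul_assoc, ← mul_assoc]⟩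
  exact (AddSubgroup.closure_le _).mpr h hx

lemma rel_sub_mem_JSG {x y : RingQuot rel} (h : RingQuot.Rel (relUnitRel rel I) x y) :
    x - y ∈ JSG rel I := by
  induction h with
  | of h =>
      obtain ⟨rfl, u, hu, rfl⟩ := h
      rw [sub_zero]
      exact subset_closure ⟨1, 1, u, hu, by rw [one_mul, mul_one]⟩
  | add_left _ ih => simpa using ih
  | mul_left _ ih =>
      rename_i a b c _
      rw [← sub_mul]
      exact JSG_mul_right rel I ih c
  | mul_right _ ih =>
      rename_i a b c _
      rw [← mul_sub]
      exact JSG_mul_left rel I ih a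

lemma sub_mem_JSG_of_qmap_eq {x y : RingQuot rel} (h : qmap rel I x = qmap rel I y) :
    x - y ∈ JSG rel I := by
  rw [qmap, RingQuot.mkRingHom_def] at h
  simp only [RingHom.coe_mk, MonoidHom.coe_mk, OneHom.coe_mk] at h
  have h' : Quot.mk (RingQuot.Rel (relUnitRel rel I)) x
      = Quot.mk (RingQuot.Rel (relUnitRel rel I)) y := congrArg RingQuot.toQuot h
  have h2 := Quot.eqvGen_exact h'
  clear h h'
  induction h2 with
  | rel a b hab => exact rel_sub_mem_JSG rel I hab
  | refl a => rw [sub_self]; exact zero_mem _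
  | symm a b _ ih => have := neg_mem ih; rwa [neg_sub] at this
  | trans a b c _ _ ih1 ih2 =>
      have := add_mem ih1 ih2; rwa [sub_add_sub_cancel] at this

lemma mul_mU_mul_mem_SG {p q : ℕ} {u : Aˣ} (hu : (u : A) - 1 ∈ I) {y z : RingQuot rel}
    (hy : y ∈ MG rel p) (hz : z ∈ MG rel q) :
    y * mU rel u * z ∈ SG rel I (p + 1 + q) := by
  have h1 : y * mU rel u ∈ closure { x : RingQuot rel | ∃ l : List Aˣ, l.length = p ∧
      x = msym rel l * mU rel u } := by
    refine mul_mem_closure (T := {mU rel u}) ?_ _ hy _ (subset_closure rfl)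
    rintro s ⟨l, hl, rfl⟩ t ht
    rw [Set.mem_singleton_iff] at ht
    subst ht
    exact subset_closure ⟨l, hl, rfl⟩
  refine mul_mem_closure ?_ _ h1 _ hz
  rintro s ⟨l₁, hl₁, rfl⟩ t ⟨l₂, hl₂, rfl⟩
  have he : msym rel l₁ * mU rel u * msym rel l₂ = msym rel (l₁ ++ u :: l₂) := by
    rw [msym_append, msym_cons, mul_assoc]
  rw [he]
  refine mem_SG rel I (by simp [hl₁, hl₂]; omega) ?_
  refine ⟨p, by simp [hl₁, hl₂], ?_⟩
  have : (l₁ ++ u :: l₂)[p]'(by simp [hl₁]) = u := by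
    subst hl₁
    rw [List.getElem_append_right (le_refl _)]
    simp
  rw [this]
  exact hu

lemma coeff_mem_SG_of_mem_JSG {x : RingQuot rel} (hx : x ∈ JSG rel I) {r : ℕ} (hr : 1 ≤ r) :
    (Dq rel Hrel x).coeff r ∈ SG rel I r := by
  refine closure_induction (p := fun x _ => (Dq rel Hrel x).coeff r ∈ SG rel I r)
    ?_ ?_ ?_ ?_ hx
  · rintro x ⟨a, b, u, hu, rfl⟩
    obtain ⟨n, rfl⟩ : ∃ n, r = n + 1 := ⟨r - 1, by omega⟩
    have hmU : Dq rel Hrel (mU rel u) = Polynomial.C (mU rel u) * Polynomial.X := by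
      rw [← msym_singleton, Dq_msym]
      simp
    rw [map_mul, map_mul, hmU]
    have e : Dq rel Hrel a * (Polynomial.C (mU rel u) * Polynomial.X) * Dq rel Hrel b
        = ((Dq rel Hrel a * Polynomial.C (mU rel u)) * Dq rel Hrel b) * Polynomial.X := by
      rw [← mul_assoc (Dq rel Hrel a) (Polynomial.C (mU rel u)) Polynomial.X,
        mul_assoc (Dq rel Hrel a * Polynomial.C (mU rel u)) Polynomial.X (Dq rel Hrel b),
        Polynomial.X_mul, ← mul_assoc]
    rw [e, Polynomial.coeff_mul_X, Polynomial.coeff_mul]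
    refine AddSubgroup.sum_mem _ ?_
    intro c hc
    rw [Finset.HasAntidiagonal.mem_antidiagonal] at hc
    rw [Polynomial.coeff_mul_C]
    have := mul_mU_mul_mem_SG rel I hu (coeff_Dq_mem rel Hrel a c.1) (coeff_Dq_mem rel Hrel b c.2)
    rwa [show c.1 + 1 + c.2 = n + 1 by omega] at this
  · show ((Dq rel Hrel) (0 : RingQuot rel)).coeff r ∈ SG rel I r
    rw [map_zero, Polynomial.coeff_zero]; exact zero_mem _
  · intro a b _ _ ha hb
    show ((Dq rel Hrel) (a + b)).coeff r ∈ SG rel I r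
    rw [map_add, Polynomial.coeff_add]; exact add_mem ha hb
  · intro a _ ha
    show ((Dq rel Hrel) (-a)).coeff r ∈ SG rel I r
    rw [map_neg, Polynomial.coeff_neg]; exact neg_mem ha

end Relative


section Rho

variable (I : Ideal A)

lemma sub_one_mem_of_units_map_eq_one {w : Aˣ}
    (h : Units.map ((Ideal.Quotient.mk I : A →+* A ⧸ I) : A →* A ⧸ I) w = 1) :
    (w : A) - 1 ∈ I := by
  have h1 : (Ideal.Quotient.mk I) (w : A) = (Ideal.Quotient.mk I) (1 : A) := by
    have := congrArg (Units.val) h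
    simpa using this
  exact (Ideal.Quotient.eq).mp h1

variable (σ : (A ⧸ I)ˣ → Aˣ)
variable (hσ : ∀ v, Units.map ((Ideal.Quotient.mk I : A →+* A ⧸ I) : A →* A ⧸ I) (σ v) = v)

include hσ in
/-- The lift of the unit section to the tensor algebra of `A/I`. -/
def rho0 : PreK (A ⧸ I) →ₐ[ℤ] RingQuot (relUnitRel rel I) :=
  TensorAlgebra.lift ℤ (AddMonoidHom.toIntLinearMap (AddMonoidHom.mk'
    (fun v => qmap rel I (mU rel (σ v.toMul))) (by
      intro v w
      have hw0 : Units.map ((Ideal.Quotient.mk I : A →+* A ⧸ I) : A →* A ⧸ I)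
          (σ ((v + w).toMul) * (σ v.toMul * σ w.toMul)⁻¹) = 1 := by
        rw [map_mul, map_inv, map_mul, hσ, hσ, hσ]
        exact mul_inv_cancel _
      have key : σ ((v + w).toMul) = (σ ((v + w).toMul) * (σ v.toMul * σ w.toMul)⁻¹)
          * (σ v.toMul * σ w.toMul) := (inv_mul_cancel_right _ _).symm
      calc qmap rel I (mU rel (σ ((v + w).toMul)))
          = qmap rel I (mU rel ((σ ((v + w).toMul) * (σ v.toMul * σ w.toMul)⁻¹)
              * (σ v.toMul * σ w.toMul))) := by rw [← key]
        _ = qmap rel I (mU rel (σ ((v + w).toMul) * (σ v.toMul * σ w.toMul)⁻¹))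
              + qmap rel I (mU rel (σ v.toMul * σ w.toMul)) := by rw [mU_mul, map_add]
        _ = 0 + (qmap rel I (mU rel (σ v.toMul)) + qmap rel I (mU rel (σ w.toMul))) := by
              rw [qmap_mU rel I (sub_one_mem_of_units_map_eq_one I hw0), mU_mul, map_add]
        _ = qmap rel I (mU rel (σ v.toMul)) + qmap rel I (mU rel (σ w.toMul)) := by
              rw [zero_add])))

lemma rho0_ι (v : Additive (A ⧸ I)ˣ) :
    rho0 rel I σ hσ (TensorAlgebra.ι ℤ v) = qmap rel I (mU rel (σ v.toMul)) := by
  exact TensorAlgebra.lift_ι_apply _ _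

lemma rho0_preSymbol (l : List (A ⧸ I)ˣ) :
    rho0 rel I σ hσ (preSymbol l) = qmap rel I (msym rel (l.map σ)) := by
  induction l with
  | nil =>
      rw [show preSymbol ([] : List (A ⧸ I)ˣ) = 1 from rfl, map_one, List.map_nil, msym_nil,
        map_one]
  | cons a l ih =>
      rw [preSymbol, map_mul, rho0_ι, ih, List.map_cons, msym_cons, map_mul]
      rfl

variable (rel' : PreK (A ⧸ I) → PreK (A ⧸ I) → Prop)
variable (Hkill : ∀ ⦃x y⦄, rel' x y → rho0 rel I σ hσ x = rho0 rel I σ hσ y)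

/-- The induced map `K(A/I) → K(A)/J`. -/
def rhoQ : RingQuot rel' →+* RingQuot (relUnitRel rel I) :=
  RingQuot.lift ⟨(rho0 rel I σ hσ).toRingHom, fun _ _ h => Hkill h⟩

lemma rhoQ_mk (x : PreK (A ⧸ I)) :
    rhoQ rel I σ hσ rel' Hkill (RingQuot.mkRingHom rel' x) = rho0 rel I σ hσ x := by
  rw [rhoQ, RingQuot.lift_mkRingHom_apply]
  rfl

variable (ψ : RingQuot rel →+* RingQuot rel')
variable (Hψ : ∀ x : PreK A, ψ (RingQuot.mkRingHom rel x)
    = RingQuot.mkRingHom rel' (preMap (Ideal.Quotient.mk I) x))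

include Hψ in
lemma rho_comp (x : RingQuot rel) :
    rhoQ rel I σ hσ rel' Hkill (ψ x) = qmap rel I x := by
  obtain ⟨y, rfl⟩ := RingQuot.mkRingHom_surjective rel x
  rw [Hψ, rhoQ_mk]
  induction y using TensorAlgebra.induction with
  | algebraMap n =>
      rw [AlgHom.commutes, AlgHom.commutes]
      rw [eq_intCast, eq_intCast, map_intCast, map_intCast]
  | ι a =>
      have h1 : preMap (Ideal.Quotient.mk I) (TensorAlgebra.ι ℤ a)
          = TensorAlgebra.ι ℤ (Additive.ofMul
              (Units.map ((Ideal.Quotient.mk I : A →+* A ⧸ I) : A →* A ⧸ I) a.toMul)) := by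
        rw [preMap, TensorAlgebra.lift_ι_apply]
        rfl
      rw [h1, rho0_ι]
      have hw0 : Units.map ((Ideal.Quotient.mk I : A →+* A ⧸ I) : A →* A ⧸ I)
          (σ ((Additive.ofMul (Units.map ((Ideal.Quotient.mk I : A →+* A ⧸ I) : A →* A ⧸ I)
            a.toMul)).toMul) * a.toMul⁻¹) = 1 := by
        rw [map_mul, map_inv, hσ]
        rw [toMul_ofMul, mul_inv_cancel]
      have key : σ ((Additive.ofMul (Units.map ((Ideal.Quotient.mk I : A →+* A ⧸ I) : A →* A ⧸ I)
            a.toMul)).toMul)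
          = (σ ((Additive.ofMul (Units.map ((Ideal.Quotient.mk I : A →+* A ⧸ I) : A →* A ⧸ I)
            a.toMul)).toMul) * a.toMul⁻¹) * a.toMul := (inv_mul_cancel_right _ _).symm
      rw [key, mU_mul, map_add, qmap_mU rel I (sub_one_mem_of_units_map_eq_one I hw0), zero_add]
      rfl
  | mul a b ha hb => rw [map_mul, map_mul, map_mul, map_mul, ha, hb]
  | add a b ha hb => rw [map_add, map_add, map_add, map_add, ha, hb]

include hσ Hkill Hψ in
theorem generic_main (Hrel : ∀ ⦃x y⦄, rel x y → y = 0 ∧ ∃ l : List Aˣ, x = preSymbol l)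
    {r : ℕ} (hr : 1 ≤ r) :
    MG rel r ⊓ AddMonoidHom.ker ψ.toAddMonoidHom = SG rel I r := by
  apply le_antisymm
  · rintro x ⟨hxM, hxk⟩
    have hk : ψ x = 0 := hxk
    have h1 : qmap rel I x = 0 := by
      rw [← rho_comp rel I σ hσ rel' Hkill ψ Hψ x, hk, map_zero]
    have h2 : x ∈ JSG rel I := by
      have := sub_mem_JSG_of_qmap_eq rel I (x := x) (y := 0)
        (by rw [h1, map_zero])
      simpa using this
    have h3 := coeff_mem_SG_of_mem_JSG rel Hrel I h2 hr
    rwa [coeff_Dq_self rel Hrel hxM] at h3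
  · rw [SG]
    refine (AddSubgroup.closure_le _).mpr ?_
    rintro x ⟨l, hl, ⟨i, hi, hrel⟩, rfl⟩
    refine AddSubgroup.mem_inf.mpr ⟨mem_MG rel hl, ?_⟩
    rw [AddMonoidHom.mem_ker]
    show ψ (msym rel l) = 0
    rw [msym, Hψ, preMap_preSymbol]
    have hone : (List.map (Units.map ((Ideal.Quotient.mk I : A →+* A ⧸ I) : A →* A ⧸ I)) l)[i]'
        (by simpa using hi) = 1 := by
      rw [List.getElem_map]
      ext
      show (Ideal.Quotient.mk I) ((l[i]'hi : Aˣ) : A) = 1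
      have : (Ideal.Quotient.mk I) ((l[i]'hi : Aˣ) : A) = (Ideal.Quotient.mk I) (1 : A) :=
        (Ideal.Quotient.eq).mpr hrel
      simpa using this
    rw [preSymbol_eq_zero_of_one_mem ⟨i, by simpa using hi, hone⟩, map_zero]

end Rho


section Stein

variable (I : Ideal A)

lemma qmap_msym_zero_of_entry (l : List Aˣ) (i : ℕ) (hi : i < l.length)
    (h : ((l[i]'hi : A) - 1) ∈ I) : qmap rel I (msym rel l) = 0 := by
  rw [msym_split rel l i hi, ← mul_assoc]
  exact qmap_sandwich rel I _ h _

lemma stein_generic [IsLocalRing A] (hle : I ≤ IsLocalRing.maximalIdeal A)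
    (a b : Aˣ) (hab : ((a : A) + (b : A)) - 1 ∈ I) (t1 t2 t3 : List Aˣ)
    (Hst : ∀ a' b' : Aˣ, ((a' : A) + (b' : A) = 1) → msym rel (a' :: (t2 ++ [b'])) = 0) :
    qmap rel I (msym rel (t1 ++ a :: (t2 ++ b :: t3))) = 0 := by
  have hmem : (1 : A) - ((a : A) + (b : A)) ∈ IsLocalRing.maximalIdeal A := by
    have h1 : -(((a : A) + (b : A)) - 1) ∈ I := neg_mem hab
    rw [neg_sub] at h1
    exact hle h1
  have hc : IsUnit ((a : A) + (b : A)) := by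
    have h2 := IsLocalRing.isUnit_one_sub_self_of_mem_nonunits _
      ((IsLocalRing.mem_maximalIdeal _).mp hmem)
    rwa [sub_sub_cancel] at h2
  set cu := hc.unit with hcu
  have hcuv : (cu : A) = (a : A) + (b : A) := hc.unit_spec
  have hcu1 : (cu : A) - 1 ∈ I := by rw [hcuv]; exact hab
  have hqc : qmap rel I (mU rel cu) = 0 := qmap_mU rel I hcu1
  set a' := a * cu⁻¹ with ha'
  set b' := b * cu⁻¹ with hb'
  have hab' : ((a' : A) + (b' : A)) = 1 := by
    have e : ((a' : A) + (b' : A)) = ((a : A) + (b : A)) * ((cu⁻¹ : Aˣ) : A) := by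
      rw [ha', hb', Units.val_mul, Units.val_mul, add_mul]
    rw [e, ← hcuv, ← Units.val_mul, mul_inv_cancel, Units.val_one]
  have ha : mU rel a = mU rel a' + mU rel cu := by
    rw [← mU_mul]
    congr 1
    rw [ha', inv_mul_cancel_right]
  have hb : mU rel b = mU rel b' + mU rel cu := by
    rw [← mU_mul]
    congr 1
    rw [hb', inv_mul_cancel_right]
  have h0 : mU rel a' * (msym rel t2 * mU rel b') = 0 := by
    have h1 := Hst a' b' hab'
    rwa [msym_cons, msym_append, msym_singleton] at h1
  rw [msym_append, msym_cons, msym_append, msym_cons]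
  rw [ha, hb]
  simp only [add_mul, mul_add, map_add, map_mul, hqc, mul_zero, zero_mul, add_zero, zero_add]
  have h0' : qmap rel I (mU rel a') * (qmap rel I (msym rel t2) * qmap rel I (mU rel b')) = 0 := by
    rw [← map_mul, ← map_mul, h0, map_zero]
  have e2 : qmap rel I (mU rel a') * (qmap rel I (msym rel t2)
        * (qmap rel I (mU rel b') * qmap rel I (msym rel t3)))
      = (qmap rel I (mU rel a') * (qmap rel I (msym rel t2) * qmap rel I (mU rel b')))
        * qmap rel I (msym rel t3) := by
    rw [mul_assoc, mul_assoc]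
  rw [e2, h0', zero_mul, mul_zero]

end Stein

section LocalSection

lemma exists_unit_section [IsLocalRing A] (I : Ideal A) :
    ∃ σ : (A ⧸ I)ˣ → Aˣ,
      ∀ v, Units.map ((Ideal.Quotient.mk I : A →+* A ⧸ I) : A →* A ⧸ I) (σ v) = v := by
  by_cases hI : I = ⊤
  · subst hI
    have : Subsingleton (A ⧸ (⊤ : Ideal A)) := Ideal.Quotient.subsingleton_iff.mpr rfl
    exact ⟨fun _ => 1, fun v => Units.ext (Subsingleton.elim _ _)⟩
  · have hle := IsLocalRing.le_maximalIdeal hI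
    have hsurj : ∀ v : (A ⧸ I)ˣ,
        ∃ u : Aˣ, Units.map ((Ideal.Quotient.mk I : A →+* A ⧸ I) : A →* A ⧸ I) u = v := by
      intro v
      obtain ⟨a, ha⟩ := Ideal.Quotient.mk_surjective ((v : (A ⧸ I)ˣ) : A ⧸ I)
      obtain ⟨b, hb⟩ := Ideal.Quotient.mk_surjective ((v⁻¹ : (A ⧸ I)ˣ) : A ⧸ I)
      have hab : (1 : A) - a * b ∈ I := by
        apply (Ideal.Quotient.eq).mp
        rw [map_one, map_mul, ha, hb, ← Units.val_mul, mul_inv_cancel, Units.val_one]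
      have hu : IsUnit (a * b) := by
        have h2 := IsLocalRing.isUnit_one_sub_self_of_mem_nonunits _
          ((IsLocalRing.mem_maximalIdeal _).mp (hle hab))
        rwa [sub_sub_cancel] at h2
      have hua : IsUnit a := isUnit_of_mul_isUnit_left hu
      refine ⟨hua.unit, Units.ext ?_⟩
      show (Ideal.Quotient.mk I) ((hua.unit : Aˣ) : A) = ((v : (A ⧸ I)ˣ) : A ⧸ I)
      rw [hua.unit_spec, ha]
    exact ⟨fun v => Classical.choose (hsurj v), fun v => Classical.choose_spec (hsurj v)⟩

end LocalSection


section Kill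

variable (I : Ideal A)

lemma kato_kill_aux [IsLocalRing A] (hle : I ≤ IsLocalRing.maximalIdeal A)
    (l : List Aˣ) (i j : ℕ) (hlt : i < j) (hj : j < l.length)
    (hsum : ((l[i]'(lt_trans hlt hj) : A) + (l[j]'hj : A)) - 1 ∈ I) :
    qmap (katoRel A) I (msym (katoRel A) l) = 0 := by
  have hi : i < l.length := lt_trans hlt hj
  set d := l.drop (i + 1) with hd
  have hdlen : d.length = l.length - (i + 1) := by rw [hd, List.length_drop]
  set k := j - i - 1 with hk
  have hkd : k < d.length := by omega
  have hdk : d[k]'hkd = l[j]'hj := by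
    have e : d[k]'hkd = l[i + 1 + k]'(by omega) := List.getElem_drop
    rw [e]
    simp only [show i + 1 + k = j from by omega]
  have hsplit1 : l = l.take i ++ (l[i]'hi) :: d := by
    conv_lhs => rw [← List.take_append_drop i l, List.drop_eq_getElem_cons hi]
  have hsplit2 : d = d.take k ++ (l[j]'hj) :: d.drop (k + 1) := by
    conv_lhs => rw [← List.take_append_drop k d, List.drop_eq_getElem_cons hkd]
    rw [hdk]
  rw [hsplit1, hsplit2]
  apply stein_generic (katoRel A) I hle _ _ hsum
  intro a' b' hab'
  apply msym_eq_zero_of_rel (x := preSymbol (a' :: (d.take k ++ [b']))) ?_ _ rfl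
  refine ⟨rfl, a' :: (d.take k ++ [b']), by simp, ⟨0, (d.take k).length + 1,
    by simp, by simp, by omega, ?_⟩, rfl⟩
  have e0 : (a' :: (d.take k ++ [b']))[0]'(by simp) = a' := rfl
  have e1 : (a' :: (d.take k ++ [b']))[(d.take k).length + 1]'(by simp) = b' := by
    rw [List.getElem_cons_succ, List.getElem_append_right (le_refl _)]
    simp
  rw [e0, e1]
  exact hab'

lemma kato_kill [IsLocalRing A] (σ : (A ⧸ I)ˣ → Aˣ)
    (hσ : ∀ v, Units.map ((Ideal.Quotient.mk I : A →+* A ⧸ I) : A →* A ⧸ I) (σ v) = v) :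
    ∀ ⦃x y⦄, katoRel (A ⧸ I) x y →
      rho0 (katoRel A) I σ hσ x = rho0 (katoRel A) I σ hσ y := by
  rintro x y ⟨rfl, lb, hlen, ⟨i, j, hi, hj, hij, hsum⟩, rfl⟩
  rw [map_zero, rho0_preSymbol]
  have hi' : i < (lb.map σ).length := by simpa using hi
  have hj' : j < (lb.map σ).length := by simpa using hj
  have hcong : ∀ (k) (hk : k < lb.length),
      (Ideal.Quotient.mk I) (((lb.map σ)[k]'(by simpa using hk) : Aˣ) : A)
        = ((lb[k]'hk : (A ⧸ I)ˣ) : A ⧸ I) := by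
    intro k hk
    rw [List.getElem_map]
    have := congrArg (Units.val) (hσ (lb[k]'hk))
    simpa using this
  by_cases hI : I = ⊤
  · subst hI
    exact qmap_msym_zero_of_entry (katoRel A) ⊤ (lb.map σ) i hi' trivial
  · have hle := IsLocalRing.le_maximalIdeal hI
    have hsum' : (((lb.map σ)[i]'hi' : A) + ((lb.map σ)[j]'hj' : A)) - 1 ∈ I := by
      apply (Ideal.Quotient.eq).mp
      rw [map_one, map_add, hcong i hi, hcong j hj, hsum]
    rcases Nat.lt_or_ge i j with hlt | hge
    · exact kato_kill_aux I hle (lb.map σ) i j hlt hj' hsum'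
    · have hlt : j < i := by omega
      have hsum'' : (((lb.map σ)[j]'hj' : A) + ((lb.map σ)[i]'hi' : A)) - 1 ∈ I := by
        rwa [add_comm]
      exact kato_kill_aux I hle (lb.map σ) j i hlt hi' hsum''

lemma tilde_kill [IsLocalRing A] (σ : (A ⧸ I)ˣ → Aˣ)
    (hσ : ∀ v, Units.map ((Ideal.Quotient.mk I : A →+* A ⧸ I) : A →* A ⧸ I) (σ v) = v) :
    ∀ ⦃x y⦄, tildeRel (A ⧸ I) x y →
      rho0 (tildeRel A) I σ hσ x = rho0 (tildeRel A) I σ hσ y := by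
  rintro x y ⟨rfl, a, b, hsum, rfl⟩
  rw [map_zero, rho0_preSymbol]
  have hca : (Ideal.Quotient.mk I) ((σ a : Aˣ) : A) = (a : A ⧸ I) := by
    have := congrArg (Units.val) (hσ a)
    simpa using this
  have hcb : (Ideal.Quotient.mk I) ((σ b : Aˣ) : A) = (b : A ⧸ I) := by
    have := congrArg (Units.val) (hσ b)
    simpa using this
  by_cases hI : I = ⊤
  · subst hI
    exact qmap_msym_zero_of_entry (tildeRel A) ⊤ ([a, b].map σ) 0 (by simp) trivial
  · have hle := IsLocalRing.le_maximalIdeal hI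
    have hsum' : (((σ a : Aˣ) : A) + ((σ b : Aˣ) : A)) - 1 ∈ I := by
      apply (Ideal.Quotient.eq).mp
      rw [map_one, map_add, hca, hcb, hsum]
    have hlist : [a, b].map σ = ([] : List Aˣ) ++ σ a :: (([] : List Aˣ) ++ σ b :: []) := by
      simp
    rw [hlist]
    apply stein_generic (tildeRel A) I hle _ _ hsum'
    intro a' b' hab'
    apply msym_eq_zero_of_rel (x := preSymbol (a' :: (([] : List Aˣ) ++ [b']))) ?_ _ rfl
    exact ⟨rfl, a', b', hab', rfl⟩

end Kill


section Assemble

variable (I : Ideal A)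

lemma Hrel_kato : ∀ ⦃x y : PreK A⦄, katoRel A x y → y = 0 ∧ ∃ l : List Aˣ, x = preSymbol l := by
  rintro x y ⟨rfl, l, -, -, rfl⟩
  exact ⟨rfl, l, rfl⟩

lemma Hrel_tilde : ∀ ⦃x y : PreK A⦄, tildeRel A x y → y = 0 ∧ ∃ l : List Aˣ, x = preSymbol l := by
  rintro x y ⟨rfl, a, b, -, rfl⟩
  exact ⟨rfl, [a, b], rfl⟩

lemma kmap_mk (x : PreK A) :
    kmap (Ideal.Quotient.mk I) (RingQuot.mkRingHom (katoRel A) x)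
      = RingQuot.mkRingHom (katoRel (A ⧸ I)) (preMap (Ideal.Quotient.mk I) x) := by
  rw [kmap, RingQuot.lift_mkRingHom_apply]
  rfl

lemma tmap_mk (x : PreK A) :
    tmap (Ideal.Quotient.mk I) (RingQuot.mkRingHom (tildeRel A) x)
      = RingQuot.mkRingHom (tildeRel (A ⧸ I)) (preMap (Ideal.Quotient.mk I) x) := by
  rw [tmap, RingQuot.lift_mkRingHom_apply]
  rfl

theorem main_kato [IsLocalRing A] {r : ℕ} (hr : 1 ≤ r) :
    relKGroup A I r = AddSubgroup.closure
      { x | ∃ l : List Aˣ, l.length = r ∧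
          (∃ i : ℕ, ∃ hi : i < l.length, ((l[i]'hi : A) - 1) ∈ I) ∧ x = ksymbol l } := by
  obtain ⟨σ, hσ⟩ := exists_unit_section I
  exact generic_main (katoRel A) I σ hσ (katoRel (A ⧸ I)) (kato_kill I σ hσ)
    (kmap (Ideal.Quotient.mk I)) (kmap_mk I) (Hrel_kato) hr

theorem main_tilde [IsLocalRing A] {r : ℕ} (hr : 1 ≤ r) :
    relTGroup A I r = AddSubgroup.closure
      { x | ∃ l : List Aˣ, l.length = r ∧
          (∃ i : ℕ, ∃ hi : i < l.length, ((l[i]'hi : A) - 1) ∈ I) ∧ x = tsymbol l } := by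
  obtain ⟨σ, hσ⟩ := exists_unit_section I
  exact generic_main (tildeRel A) I σ hσ (tildeRel (A ⧸ I)) (tilde_kill I σ hσ)
    (tmap (Ideal.Quotient.mk I)) (tmap_mk I) (Hrel_tilde) hr

end Assemble

end MilnorAux

end


open MilnorKTheory in
/-- Let `A` be a local ring and `I ⊆ A` an ideal.  Then for every `r ≥ 1` the
relative Milnor K-group `K^M_r(A,I)` and the relative group `K̃^M_r(A,I)` are each generated by
Milnor symbols `{a₁, …, a_r}` (with all `a_j ∈ A^×`) such that `a_i ∈ K^M_1(A,I)` (i.e. the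
unit `a_i` is congruent to `1` modulo `I`) for some `1 ≤ i ≤ r`. -/
theorem relMilnor_generated_by_relative_symbols
    (A : Type*) [CommRing A] [IsLocalRing A] (I : Ideal A) (r : ℕ) (hr : 1 ≤ r) :
    relKGroup A I r = AddSubgroup.closure
      { x | ∃ l : List Aˣ, l.length = r ∧
          (∃ i : ℕ, ∃ hi : i < l.length, ((l[i]'hi : A) - 1) ∈ I) ∧ x = ksymbol l } ∧
    relTGroup A I r = AddSubgroup.closure
      { x | ∃ l : List Aˣ, l.length = r ∧
          (∃ i : ℕ, ∃ hi : i < l.length, ((l[i]'hi : A) - 1) ∈ I) ∧ x = tsymbol l } := ⟨MilnorAux.main_kato I hr, MilnorAux.main_tilde I hr⟩
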